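/- arXiv:1105.6279 — 2 statements merged into one kernel-verified Lean document; each statement's English description precedes it below -/
import Mathlib

section
/- Define Φ_ν(q) = ∑_{n=1}^∞ n^ν q^n/(1−q^n) for |q| < 1, and Q(q) = 1 + 240·Φ₃(q). Then Φ₇(q) = (Q(q)² − 1)/480. -/
/-- Lambert-type Eisenstein series Φ_ν(q) = ∑_{n=1}^∞ n^ν q^n/(1−q^n). -/
noncomputable def Phi (ν : ℕ) (q : ℂ) : ℂ :=
  ∑' n : ℕ, ((n : ℂ) + 1) ^ ν * q ^ (n + 1) / (1 - q ^ (n + 1))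

namespace Phi7Aux

open Finset

/-- Shifted Lambert kernel: `u q n = q^(n+1)/(1-q^(n+1))`. -/
noncomputable def u (q : ℂ) (n : ℕ) : ℂ := q ^ (n + 1) / (1 - q ^ (n + 1))

/-- weight `W(a,b) = (a+1)³(b+1)³ + (a+1)²(b+1)⁴`. -/
noncomputable def Ww (p : ℕ × ℕ) : ℂ :=
  ((p.1 : ℂ) + 1) ^ 3 * ((p.2 : ℂ) + 1) ^ 3 + ((p.1 : ℂ) + 1) ^ 2 * ((p.2 : ℂ) + 1) ^ 4

/-- weight `V(a,b) = (a+1)²(b+1)²(a+b+2)²`. -/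
noncomputable def Vw (p : ℕ × ℕ) : ℂ :=
  ((p.1 : ℂ) + 1) ^ 2 * ((p.2 : ℂ) + 1) ^ 2 * ((p.1 : ℂ) + (p.2 : ℂ) + 2) ^ 2

/-- weight `H(a,b) = (a+1)²(b+1)²(b−a)²`. -/
noncomputable def Hw (p : ℕ × ℕ) : ℂ :=
  ((p.1 : ℂ) + 1) ^ 2 * ((p.2 : ℂ) + 1) ^ 2 * ((p.2 : ℂ) - (p.1 : ℂ)) ^ 2

variable {q : ℂ}

lemma norm_qpow_lt (hq : ‖q‖ < 1) (n : ℕ) : ‖q ^ (n + 1)‖ < 1 := by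
  rw [norm_pow]
  exact pow_lt_one₀ (norm_nonneg q) hq (Nat.succ_ne_zero n)

lemma one_sub_ne (hq : ‖q‖ < 1) (n : ℕ) : 1 - q ^ (n + 1) ≠ 0 := by
  intro h
  have h1 : q ^ (n + 1) = 1 := by linear_combination -h
  have := norm_qpow_lt hq n
  rw [h1] at this
  simp at this

lemma norm_u_le (hq : ‖q‖ < 1) (n : ℕ) :
    ‖u q n‖ ≤ (1 - ‖q‖)⁻¹ * ‖q‖ ^ (n + 1) := by
  have h0 : (0:ℝ) < 1 - ‖q‖ := by linarith
  have hden : 1 - ‖q‖ ≤ ‖1 - q ^ (n + 1)‖ := by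
    have h1 : ‖q ^ (n + 1)‖ ≤ ‖q‖ := by
      rw [norm_pow]
      exact pow_le_of_le_one (norm_nonneg q) hq.le (Nat.succ_ne_zero n)
    have h2 : (1:ℝ) - ‖q ^ (n + 1)‖ ≤ ‖1 - q ^ (n + 1)‖ := by
      simpa using norm_sub_norm_le (1:ℂ) (q ^ (n + 1))
    linarith
  rw [u, norm_div]
  rw [div_le_iff₀ (lt_of_lt_of_le h0 hden)]
  calc ‖q ^ (n+1)‖ = (1 - ‖q‖)⁻¹ * ‖q‖ ^ (n+1) * (1 - ‖q‖) := by
        rw [norm_pow, mul_comm ((1 - ‖q‖)⁻¹) _, mul_assoc, inv_mul_cancel₀ h0.ne', mul_one]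
  _ ≤ (1 - ‖q‖)⁻¹ * ‖q‖ ^ (n + 1) * ‖1 - q ^ (n + 1)‖ := by
        apply mul_le_mul_of_nonneg_left hden
        positivity

lemma norm_u_le' (hq : ‖q‖ < 1) (n : ℕ) : ‖u q n‖ ≤ (1 - ‖q‖)⁻¹ := by
  refine (norm_u_le hq n).trans ?_
  have h0 : (0:ℝ) < 1 - ‖q‖ := by linarith
  have h1 : ‖q‖ ^ (n + 1) ≤ 1 := pow_le_one₀ (norm_nonneg q) hq.le
  nlinarith [inv_pos.mpr h0]

/-- The basic summable majorant. -/
lemma summable_maj (hq : ‖q‖ < 1) (k : ℕ) :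
    Summable (fun n : ℕ => ((n : ℝ) + 1) ^ k * ‖q‖ ^ (n + 1)) := by
  have h : Summable (fun n : ℕ => (n : ℝ) ^ k * ‖q‖ ^ n) := by
    apply summable_pow_mul_geometric_of_norm_lt_one
    rwa [Real.norm_eq_abs, abs_of_nonneg (norm_nonneg q)]
  have := h.comp_injective (add_left_injective 1)
  refine this.congr fun n => ?_
  simp [add_comm]

lemma summable_single (hq : ‖q‖ < 1) {f : ℕ → ℂ} (C : ℝ) (k : ℕ)
    (h : ∀ n, ‖f n‖ ≤ C * (((n : ℝ) + 1) ^ k * ‖q‖ ^ (n + 1))) : Summable f :=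
  Summable.of_norm_bounded ((summable_maj hq k).mul_left C) h

set_option maxHeartbeats 1000000 in
lemma summable_double (hq : ‖q‖ < 1) {f : ℕ × ℕ → ℂ} (C : ℝ) (hC : 0 ≤ C)
    (h : ∀ p : ℕ × ℕ, ‖f p‖ ≤
      C * (((p.1 : ℝ) + 1) ^ 7 * ‖q‖ ^ (p.1 + 1)) * (((p.2 : ℝ) + 1) ^ 7 * ‖q‖ ^ (p.2 + 1))) :
    Summable f := by
  have hg : Summable (fun p : ℕ × ℕ =>
      (C * (((p.1 : ℝ) + 1) ^ 7 * ‖q‖ ^ (p.1 + 1))) * (((p.2 : ℝ) + 1) ^ 7 * ‖q‖ ^ (p.2 + 1))) := by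
    apply Summable.mul_of_nonneg ((summable_maj hq 7).mul_left C) (summable_maj hq 7)
      (by intro n; positivity) (by intro n; positivity)
  apply Summable.of_norm_bounded hg
  intro p
  calc ‖f p‖ ≤ C * (((p.1 : ℝ) + 1) ^ 7 * ‖q‖ ^ (p.1 + 1)) *
      (((p.2 : ℝ) + 1) ^ 7 * ‖q‖ ^ (p.2 + 1)) := h p
  _ = _ := by ring

lemma norm_cast_succ (n : ℕ) : ‖((n : ℂ) + 1)‖ = (n : ℝ) + 1 := by
  rw [show ((n:ℂ) + 1) = ((n+1 : ℕ) : ℂ) by push_cast; ring]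
  rw [Complex.norm_natCast]
  push_cast; ring

/-- Master double summability: weight bounded by `4(a+1)⁷(b+1)⁷` times kernel
bounded by `K²·r^(a+1)r^(b+1)`. -/
lemma summable_wv (hq : ‖q‖ < 1) {w v : ℕ × ℕ → ℂ}
    (hw : ∀ p : ℕ × ℕ, ‖w p‖ ≤ 4 * (((p.1 : ℝ) + 1) ^ 7 * ((p.2 : ℝ) + 1) ^ 7))
    (hv : ∀ p : ℕ × ℕ, ‖v p‖ ≤
      ((1 - ‖q‖)⁻¹ * (1 - ‖q‖)⁻¹) * (‖q‖ ^ (p.1 + 1) * ‖q‖ ^ (p.2 + 1))) :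
    Summable (fun p => w p * v p) := by
  have h0 : (0:ℝ) < 1 - ‖q‖ := by linarith
  apply summable_double hq (4 * ((1 - ‖q‖)⁻¹ * (1 - ‖q‖)⁻¹)) (by positivity)
  intro p
  rw [norm_mul]
  calc ‖w p‖ * ‖v p‖ ≤ (4 * (((p.1 : ℝ) + 1) ^ 7 * ((p.2 : ℝ) + 1) ^ 7)) *
      (((1 - ‖q‖)⁻¹ * (1 - ‖q‖)⁻¹) * (‖q‖ ^ (p.1 + 1) * ‖q‖ ^ (p.2 + 1))) := by
        apply mul_le_mul (hw p) (hv p) (norm_nonneg _) (by positivity)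
  _ = _ := by ring

lemma norm_uu_le (hq : ‖q‖ < 1) (a b : ℕ) :
    ‖u q a * u q b‖ ≤ ((1 - ‖q‖)⁻¹ * (1 - ‖q‖)⁻¹) * (‖q‖ ^ (a + 1) * ‖q‖ ^ (b + 1)) := by
  have h0 : (0:ℝ) < 1 - ‖q‖ := by linarith
  rw [norm_mul]
  calc ‖u q a‖ * ‖u q b‖
      ≤ ((1 - ‖q‖)⁻¹ * ‖q‖ ^ (a+1)) * ((1 - ‖q‖)⁻¹ * ‖q‖ ^ (b+1)) :=
        mul_le_mul (norm_u_le hq a) (norm_u_le hq b) (norm_nonneg _)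
          (mul_nonneg (inv_nonneg.mpr h0.le) (by positivity))
  _ = _ := by ring

lemma qpow_split (a b : ℕ) : ‖q‖ ^ (a + b + 1 + 1) = ‖q‖ ^ (a + 1) * ‖q‖ ^ (b + 1) := by
  rw [← pow_add]; congr 1; omega

lemma norm_uab_mul_u_le (hq : ‖q‖ < 1) (a b c : ℕ) :
    ‖u q (a + b + 1) * u q c‖ ≤
      ((1 - ‖q‖)⁻¹ * (1 - ‖q‖)⁻¹) * (‖q‖ ^ (a + 1) * ‖q‖ ^ (b + 1)) := by
  have h0 : (0:ℝ) < 1 - ‖q‖ := by linarith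
  rw [norm_mul]
  calc ‖u q (a+b+1)‖ * ‖u q c‖
      ≤ ((1 - ‖q‖)⁻¹ * ‖q‖ ^ (a+b+1+1)) * (1 - ‖q‖)⁻¹ :=
        mul_le_mul (norm_u_le hq _) (norm_u_le' hq c) (norm_nonneg _)
          (mul_nonneg (inv_nonneg.mpr h0.le) (by positivity))
  _ = _ := by rw [qpow_split a b]; ring

lemma norm_uab_le (hq : ‖q‖ < 1) (a b : ℕ) :
    ‖u q (a + b + 1)‖ ≤
      ((1 - ‖q‖)⁻¹ * (1 - ‖q‖)⁻¹) * (‖q‖ ^ (a + 1) * ‖q‖ ^ (b + 1)) := by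
  have h0 : (0:ℝ) < 1 - ‖q‖ := by linarith
  have hK : 1 ≤ (1 - ‖q‖)⁻¹ := (one_le_inv₀ h0).mpr (by linarith [norm_nonneg q])
  calc ‖u q (a+b+1)‖ ≤ (1 - ‖q‖)⁻¹ * ‖q‖ ^ (a+b+1+1) := norm_u_le hq _
  _ = 1 * ((1 - ‖q‖)⁻¹ * (‖q‖ ^ (a+1) * ‖q‖ ^ (b+1))) := by rw [qpow_split a b]; ring
  _ ≤ (1 - ‖q‖)⁻¹ * ((1 - ‖q‖)⁻¹ * (‖q‖ ^ (a+1) * ‖q‖ ^ (b+1))) := by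
        apply mul_le_mul_of_nonneg_right hK
        positivity
  _ = _ := by ring

/-- Norm bound on monomial weights. -/
lemma norm_mono_le (a b i j : ℕ) (hi : i ≤ 7) (hj : j ≤ 7) :
    ‖((a : ℂ) + 1) ^ i * ((b : ℂ) + 1) ^ j‖ ≤ ((a : ℝ) + 1) ^ 7 * ((b : ℝ) + 1) ^ 7 := by
  rw [norm_mul, norm_pow, norm_pow, norm_cast_succ, norm_cast_succ]
  have hX : (1:ℝ) ≤ (a : ℝ) + 1 := by linarith [Nat.cast_nonneg (α := ℝ) a]
  have hY : (1:ℝ) ≤ (b : ℝ) + 1 := by linarith [Nat.cast_nonneg (α := ℝ) b]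
  exact mul_le_mul (pow_le_pow_right₀ hX hi) (pow_le_pow_right₀ hY hj)
    (by positivity) (by positivity)

lemma norm_Ww_le (p : ℕ × ℕ) :
    ‖Ww p‖ ≤ 4 * (((p.1 : ℝ) + 1) ^ 7 * ((p.2 : ℝ) + 1) ^ 7) := by
  have h1 := norm_mono_le p.1 p.2 3 3 (by norm_num) (by norm_num)
  have h2 := norm_mono_le p.1 p.2 2 4 (by norm_num) (by norm_num)
  have h3 : (0:ℝ) ≤ ((p.1 : ℝ) + 1) ^ 7 * ((p.2 : ℝ) + 1) ^ 7 := by positivity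
  calc ‖Ww p‖ ≤ ‖((p.1 : ℂ) + 1) ^ 3 * ((p.2 : ℂ) + 1) ^ 3‖ +
      ‖((p.1 : ℂ) + 1) ^ 2 * ((p.2 : ℂ) + 1) ^ 4‖ := norm_add_le _ _
  _ ≤ 4 * (((p.1 : ℝ) + 1) ^ 7 * ((p.2 : ℝ) + 1) ^ 7) := by linarith

lemma norm_Ww_swap_le (p : ℕ × ℕ) :
    ‖Ww (p.2, p.1)‖ ≤ 4 * (((p.1 : ℝ) + 1) ^ 7 * ((p.2 : ℝ) + 1) ^ 7) := by
  have := norm_Ww_le (p.2, p.1)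
  simpa [mul_comm] using this

lemma norm_Vw_le (p : ℕ × ℕ) :
    ‖Vw p‖ ≤ 4 * (((p.1 : ℝ) + 1) ^ 7 * ((p.2 : ℝ) + 1) ^ 7) := by
  set X := (p.1 : ℝ) + 1 with hXdef
  set Y := (p.2 : ℝ) + 1 with hYdef
  have hX : (1:ℝ) ≤ X := by rw [hXdef]; linarith [Nat.cast_nonneg (α := ℝ) p.1]
  have hY : (1:ℝ) ≤ Y := by rw [hYdef]; linarith [Nat.cast_nonneg (α := ℝ) p.2]
  have h1 : ‖Vw p‖ = X ^ 2 * Y ^ 2 * ‖((p.1 : ℂ) + (p.2 : ℂ) + 2)‖ ^ 2 := by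
    rw [Vw, norm_mul, norm_mul, norm_pow, norm_pow, norm_pow, norm_cast_succ, norm_cast_succ]
  have h2 : ‖((p.1 : ℂ) + (p.2 : ℂ) + 2)‖ = (p.1 : ℝ) + (p.2 : ℝ) + 2 := by
    rw [show ((p.1:ℂ) + (p.2:ℂ) + 2) = ((p.1 + p.2 + 2 : ℕ) : ℂ) by push_cast; ring,
      Complex.norm_natCast]
    push_cast; ring
  have h3 : (p.1 : ℝ) + (p.2 : ℝ) + 2 ≤ 2 * (X * Y) := by
    simp only [X, Y]; nlinarith [Nat.cast_nonneg (α := ℝ) p.1, Nat.cast_nonneg (α := ℝ) p.2]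
  have h4 : ‖((p.1 : ℂ) + (p.2 : ℂ) + 2)‖ ^ 2 ≤ 4 * (X * Y) ^ 2 := by
    rw [h2]
    nlinarith [h3, Nat.cast_nonneg (α := ℝ) p.1, Nat.cast_nonneg (α := ℝ) p.2]
  have h5 : X ^ 3 * Y ^ 3 ≤ X ^ 7 * Y ^ 7 :=
    mul_le_mul (pow_le_pow_right₀ hX (by norm_num)) (pow_le_pow_right₀ hY (by norm_num))
      (by positivity) (by positivity)
  calc ‖Vw p‖ = X ^ 2 * Y ^ 2 * ‖((p.1 : ℂ) + (p.2 : ℂ) + 2)‖ ^ 2 := h1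
  _ ≤ X ^ 2 * Y ^ 2 * (4 * (X * Y) ^ 2) := by
      apply mul_le_mul_of_nonneg_left h4; positivity
  _ = 4 * (X ^ 4 * Y ^ 4) := by ring
  _ ≤ 4 * (X ^ 7 * Y ^ 7) := by
      have : X ^ 4 * Y ^ 4 ≤ X ^ 7 * Y ^ 7 :=
        mul_le_mul (pow_le_pow_right₀ hX (by norm_num)) (pow_le_pow_right₀ hY (by norm_num))
          (by positivity) (by positivity)
      linarith

lemma norm_Hw_le (p : ℕ × ℕ) :
    ‖Hw p‖ ≤ 4 * (((p.1 : ℝ) + 1) ^ 7 * ((p.2 : ℝ) + 1) ^ 7) := by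
  set X := (p.1 : ℝ) + 1 with hXdef
  set Y := (p.2 : ℝ) + 1 with hYdef
  have hX : (1:ℝ) ≤ X := by rw [hXdef]; linarith [Nat.cast_nonneg (α := ℝ) p.1]
  have hY : (1:ℝ) ≤ Y := by rw [hYdef]; linarith [Nat.cast_nonneg (α := ℝ) p.2]
  have h1 : ‖Hw p‖ = X ^ 2 * Y ^ 2 * ‖((p.2 : ℂ) - (p.1 : ℂ))‖ ^ 2 := by
    rw [Hw, norm_mul, norm_mul, norm_pow, norm_pow, norm_pow, norm_cast_succ, norm_cast_succ]
  have h2 : ‖((p.2 : ℂ) - (p.1 : ℂ))‖ ≤ X * Y := by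
    calc ‖((p.2 : ℂ) - (p.1 : ℂ))‖ ≤ ‖((p.2 : ℂ))‖ + ‖((p.1 : ℂ))‖ := norm_sub_le _ _
    _ = (p.2 : ℝ) + (p.1 : ℝ) := by rw [Complex.norm_natCast, Complex.norm_natCast]
    _ ≤ X * Y := by simp only [X, Y]
                    nlinarith [Nat.cast_nonneg (α := ℝ) p.1, Nat.cast_nonneg (α := ℝ) p.2]
  have h4 : ‖((p.2 : ℂ) - (p.1 : ℂ))‖ ^ 2 ≤ (X * Y) ^ 2 := by
    have h0 : (0:ℝ) ≤ ‖((p.2 : ℂ) - (p.1 : ℂ))‖ := norm_nonneg _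
    nlinarith
  have h5 : X ^ 4 * Y ^ 4 ≤ X ^ 7 * Y ^ 7 :=
    mul_le_mul (pow_le_pow_right₀ hX (by norm_num)) (pow_le_pow_right₀ hY (by norm_num))
      (by positivity) (by positivity)
  calc ‖Hw p‖ = X ^ 2 * Y ^ 2 * ‖((p.2 : ℂ) - (p.1 : ℂ))‖ ^ 2 := h1
  _ ≤ X ^ 2 * Y ^ 2 * (X * Y) ^ 2 := by apply mul_le_mul_of_nonneg_left h4; positivity
  _ = X ^ 4 * Y ^ 4 := by ring
  _ ≤ 4 * (X ^ 7 * Y ^ 7) := by nlinarith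

/-! ### Summability of the specific double series -/

lemma S_prod (hq : ‖q‖ < 1) (i j : ℕ) (hi : i ≤ 7) (hj : j ≤ 7) :
    Summable (fun p : ℕ × ℕ =>
      (((p.1 : ℂ) + 1) ^ i * u q p.1) * (((p.2 : ℂ) + 1) ^ j * u q p.2)) := by
  have hw : ∀ p : ℕ × ℕ, ‖((p.1 : ℂ) + 1) ^ i * ((p.2 : ℂ) + 1) ^ j‖ ≤
      4 * (((p.1 : ℝ) + 1) ^ 7 * ((p.2 : ℝ) + 1) ^ 7) := by
    intro p
    have h1 := norm_mono_le p.1 p.2 i j hi hj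
    have h2 : (0:ℝ) ≤ ((p.1 : ℝ) + 1) ^ 7 * ((p.2 : ℝ) + 1) ^ 7 := by positivity
    linarith
  have := summable_wv hq (w := fun p : ℕ × ℕ => ((p.1 : ℂ) + 1) ^ i * ((p.2 : ℂ) + 1) ^ j)
    (v := fun p : ℕ × ℕ => u q p.1 * u q p.2) hw (fun p => norm_uu_le hq p.1 p.2)
  exact this.congr fun p => by ring

lemma S_T1 (hq : ‖q‖ < 1) :
    Summable (fun p : ℕ × ℕ => Ww p * (u q (p.1 + p.2 + 1) * u q p.1)) :=
  summable_wv hq norm_Ww_le (fun p => norm_uab_mul_u_le hq p.1 p.2 p.1)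

lemma S_T2 (hq : ‖q‖ < 1) :
    Summable (fun p : ℕ × ℕ => Ww p * (u q (p.1 + p.2 + 1) * u q p.2)) :=
  summable_wv hq norm_Ww_le (fun p => norm_uab_mul_u_le hq p.1 p.2 p.2)

lemma S_T2' (hq : ‖q‖ < 1) :
    Summable (fun p : ℕ × ℕ => Ww (p.2, p.1) * (u q (p.1 + p.2 + 1) * u q p.1)) :=
  summable_wv hq norm_Ww_swap_le (fun p => norm_uab_mul_u_le hq p.1 p.2 p.1)

lemma S_T3 (hq : ‖q‖ < 1) :
    Summable (fun p : ℕ × ℕ => Ww p * u q (p.1 + p.2 + 1)) :=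
  summable_wv hq norm_Ww_le (fun p => norm_uab_le hq p.1 p.2)

lemma S_X (hq : ‖q‖ < 1) :
    Summable (fun p : ℕ × ℕ => Vw p * (u q (p.1 + p.2 + 1) * u q p.1)) :=
  summable_wv hq norm_Vw_le (fun p => norm_uab_mul_u_le hq p.1 p.2 p.1)

lemma S_P (hq : ‖q‖ < 1) :
    Summable (fun p : ℕ × ℕ => Hw p * (u q p.1 * u q p.2)) :=
  summable_wv hq norm_Hw_le (fun p => norm_uu_le hq p.1 p.2)

/-! ### Single series -/

lemma summable_f (hq : ‖q‖ < 1) (ν : ℕ) :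
    Summable (fun n : ℕ => ((n : ℂ) + 1) ^ ν * u q n) := by
  apply summable_single hq ((1 - ‖q‖)⁻¹) ν
  intro n
  rw [norm_mul, norm_pow, norm_cast_succ]
  calc ((n : ℝ) + 1) ^ ν * ‖u q n‖
      ≤ ((n : ℝ) + 1) ^ ν * ((1 - ‖q‖)⁻¹ * ‖q‖ ^ (n + 1)) :=
        mul_le_mul_of_nonneg_left (norm_u_le hq n) (by positivity)
  _ = _ := by ring

lemma Phi_eq (ν : ℕ) (q : ℂ) : Phi ν q = ∑' n : ℕ, ((n : ℂ) + 1) ^ ν * u q n :=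
  tsum_congr fun n => mul_div_assoc _ _ _

lemma prod_eq (hq : ‖q‖ < 1) (i j : ℕ) (hi : i ≤ 7) (hj : j ≤ 7) :
    Phi i q * Phi j q = ∑' p : ℕ × ℕ,
      (((p.1 : ℂ) + 1) ^ i * u q p.1) * (((p.2 : ℂ) + 1) ^ j * u q p.2) := by
  rw [Phi_eq i q, Phi_eq j q]
  exact Summable.tsum_mul_tsum (summable_f hq i) (summable_f hq j) (S_prod hq i j hi hj)

/-! ### The key pointwise identity -/

lemma u_mul_u (hq : ‖q‖ < 1) (a b : ℕ) :
    u q a * u q b = u q (a + b + 1) * u q a + u q (a + b + 1) * u q b + u q (a + b + 1) := by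
  have ha := one_sub_ne hq a
  have hb := one_sub_ne hq b
  have hab := one_sub_ne hq (a + b + 1)
  rw [u, u, u]
  field_simp
  ring

/-! ### Antidiagonal regrouping -/

lemma tsum_antidiag {F : ℕ × ℕ → ℂ} (h : Summable F) :
    ∑' p : ℕ × ℕ, F p = ∑' n : ℕ, ∑ kl ∈ Finset.HasAntidiagonal.antidiagonal n, F kl := by
  calc ∑' p : ℕ × ℕ, F p
      = ∑' x : (Σ n : ℕ, (Finset.HasAntidiagonal.antidiagonal n : Finset (ℕ × ℕ))), F (x.2 : ℕ × ℕ) :=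
        (Finset.HasAntidiagonal.sigmaAntidiagonalEquivProd.tsum_eq F).symm
  _ = ∑' n : ℕ, ∑' kl : (Finset.HasAntidiagonal.antidiagonal n : Finset (ℕ × ℕ)), F (kl : ℕ × ℕ) :=
        Summable.tsum_sigma' (fun n => (hasSum_fintype _).summable)
          (Finset.HasAntidiagonal.sigmaAntidiagonalEquivProd.summable_iff.mpr h)
  _ = ∑' n : ℕ, ∑ kl ∈ Finset.HasAntidiagonal.antidiagonal n, F kl :=
        tsum_congr fun n => Finset.tsum_subtype _ _

/-! ### The finite combinatorial identity -/

/-- The closed form of the partial sums. -/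
noncomputable def Qpoly (N : ℂ) (m : ℂ) : ℂ :=
  (34/15)*m + (74/15)*m*N + (39/10)*m*N^2 + (4/3)*m*N^3 + (1/6)*m*N^4
  + (13/6)*m^2 + (85/12)*m^2*N + (15/2)*m^2*N^2 + (13/4)*m^2*N^3 + (1/2)*m^2*N^4
  - (8/3)*m^3 - (10/3)*m^3*N + (7/6)*m^3*N^3 + (1/3)*m^3*N^4
  - (5/6)*m^4 - (41/12)*m^4*N - 3*m^4*N^2 - (3/4)*m^4*N^3
  + (7/5)*m^5 + (19/10)*m^5*N + (3/5)*m^5*N^2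
  - (1/3)*m^6 - (1/6)*m^6*N

lemma AUX (N : ℂ) : ∀ m : ℕ,
    ∑ k ∈ Finset.range m,
      (((k:ℂ)+1)^3*(N-(k:ℂ)+1)^3 + ((k:ℂ)+1)^2*(N-(k:ℂ)+1)^4) = Qpoly N m := by
  intro m
  induction m with
  | zero => simp [Qpoly]
  | succ m ih =>
    rw [Finset.sum_range_succ, ih, Qpoly, Qpoly]
    push_cast
    ring

lemma FIN (n : ℕ) :
    ∑ kl ∈ Finset.HasAntidiagonal.antidiagonal n, Ww kl = (((n:ℂ)+2)^7 - ((n:ℂ)+2)^3)/60 := by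
  rw [Finset.Nat.sum_antidiagonal_eq_sum_range_succ_mk]
  have hcongr : ∀ k ∈ Finset.range (n+1), Ww (k, n - k) =
      ((k:ℂ)+1)^3*((n:ℂ)-(k:ℂ)+1)^3 + ((k:ℂ)+1)^2*((n:ℂ)-(k:ℂ)+1)^4 := by
    intro k hk
    have hk' : k ≤ n := Nat.lt_succ_iff.mp (Finset.mem_range.mp hk)
    simp only [Ww]
    rw [Nat.cast_sub hk']
  rw [Finset.sum_congr rfl hcongr, AUX (n:ℂ) (n+1)]
  rw [Qpoly]
  push_cast
  ring


/-! ### Main steps -/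

/-- `X = ∑ V(a,b) u_{a+b+1} u_a`. -/
noncomputable def Xs (q : ℂ) : ℂ := ∑' p : ℕ × ℕ, Vw p * (u q (p.1 + p.2 + 1) * u q p.1)

/-- `T = ∑ W(a,b) u_{a+b+1}`. -/
noncomputable def Ts (q : ℂ) : ℂ := ∑' p : ℕ × ℕ, Ww p * u q (p.1 + p.2 + 1)

lemma stepE1 (hq : ‖q‖ < 1) :
    Phi 3 q * Phi 3 q + Phi 2 q * Phi 4 q = Xs q + Ts q := by
  have hsum33 := S_prod hq 3 3 (by norm_num) (by norm_num)
  have hsum24 := S_prod hq 2 4 (by norm_num) (by norm_num)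
  have h1 : Phi 3 q * Phi 3 q + Phi 2 q * Phi 4 q
      = ∑' p : ℕ × ℕ, (Ww p * (u q p.1 * u q p.2)) := by
    rw [prod_eq hq 3 3 (by norm_num) (by norm_num), prod_eq hq 2 4 (by norm_num) (by norm_num),
      ← Summable.tsum_add hsum33 hsum24]
    exact tsum_congr fun p => by simp only [Ww]; ring
  rw [h1]
  have h2 : ∀ p : ℕ × ℕ, Ww p * (u q p.1 * u q p.2) =
      Ww p * (u q (p.1 + p.2 + 1) * u q p.1) + Ww p * (u q (p.1 + p.2 + 1) * u q p.2)
        + Ww p * u q (p.1 + p.2 + 1) := fun p => by rw [u_mul_u hq p.1 p.2]; ring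
  rw [tsum_congr h2]
  rw [Summable.tsum_add ((S_T1 hq).add (S_T2 hq)) (S_T3 hq), Summable.tsum_add (S_T1 hq) (S_T2 hq)]
  have hswap : ∑' p : ℕ × ℕ, Ww p * (u q (p.1 + p.2 + 1) * u q p.2)
      = ∑' p : ℕ × ℕ, Ww (p.2, p.1) * (u q (p.1 + p.2 + 1) * u q p.1) := by
    rw [← (Equiv.prodComm ℕ ℕ).tsum_eq
      (fun p : ℕ × ℕ => Ww p * (u q (p.1 + p.2 + 1) * u q p.2))]
    apply tsum_congr
    intro p
    simp only [Equiv.prodComm_apply, Prod.fst_swap, Prod.snd_swap]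
    rw [Nat.add_comm p.2 p.1]
    rfl
  rw [hswap, ← Summable.tsum_add (S_T1 hq) (S_T2' hq)]
  have h3 : ∀ p : ℕ × ℕ,
      Ww p * (u q (p.1 + p.2 + 1) * u q p.1) + Ww (p.2, p.1) * (u q (p.1 + p.2 + 1) * u q p.1)
      = Vw p * (u q (p.1 + p.2 + 1) * u q p.1) := fun p => by simp only [Ww, Vw]; ring
  rw [tsum_congr h3, Xs, Ts]

lemma split_P (hq : ‖q‖ < 1) :
    ∑' p : ℕ × ℕ, Hw p * (u q p.1 * u q p.2) = Xs q + Xs q := by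
  have hsP : Summable (fun p : ℕ × ℕ => Hw p * (u q p.1 * u q p.2)) := S_P hq
  set s : Set (ℕ × ℕ) := {p : ℕ × ℕ | p.1 < p.2} with hs
  set P : ℕ × ℕ → ℂ := fun p => Hw p * (u q p.1 * u q p.2) with hPdef
  have hsplit : ∑' p, P p = (∑' p, s.indicator P p) + ∑' p, sᶜ.indicator P p := by
    rw [← Summable.tsum_add (hsP.indicator _) (hsP.indicator _)]
    exact tsum_congr fun p => (Set.indicator_self_add_compl_apply s P p).symm
  have hi : Function.Injective (fun r : ℕ × ℕ => ((r.1, r.1 + r.2 + 1) : ℕ × ℕ)) := by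
    intro x y h
    simp only [Prod.mk.injEq] at h
    exact Prod.ext h.1 (by omega)
  have hsupp1 : Function.support (s.indicator P)
      ⊆ Set.range (fun r : ℕ × ℕ => ((r.1, r.1 + r.2 + 1) : ℕ × ℕ)) := by
    intro p hp
    by_cases h : p.1 < p.2
    · exact ⟨(p.1, p.2 - p.1 - 1), Prod.ext rfl (by simp; omega)⟩
    · exact absurd (Set.indicator_of_notMem (by simpa [hs] using h) P) hp
  have h1 : ∑' p, s.indicator P p = Xs q := by
    rw [← hi.tsum_eq hsupp1, Xs]
    apply tsum_congr
    intro r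
    rw [Set.indicator_of_mem (by simp only [hs, Set.mem_setOf_eq]; omega) P]
    simp only [hPdef, Hw, Vw]
    push_cast
    ring
  have hj : Function.Injective (fun r : ℕ × ℕ => ((r.1 + r.2 + 1, r.2) : ℕ × ℕ)) := by
    intro x y h
    simp only [Prod.mk.injEq] at h
    exact Prod.ext (by omega) h.2
  have hsupp2 : Function.support (sᶜ.indicator P)
      ⊆ Set.range (fun r : ℕ × ℕ => ((r.1 + r.2 + 1, r.2) : ℕ × ℕ)) := by
    intro p hp
    rcases lt_trichotomy p.1 p.2 with h | h | h
    · refine absurd (Set.indicator_of_notMem ?_ P) hp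
      simp [hs, Set.mem_setOf_eq, h]
    · refine absurd ?_ hp
      have hz : P p = 0 := by
        simp only [hPdef, Hw, h]
        ring
      by_cases hm : p ∈ sᶜ
      · rw [Set.indicator_of_mem hm P, hz]
      · rw [Set.indicator_of_notMem hm P]
    · exact ⟨(p.1 - p.2 - 1, p.2), Prod.ext (by simp; omega) rfl⟩
  have h2 : ∑' p, sᶜ.indicator P p = Xs q := by
    rw [← hj.tsum_eq hsupp2]
    have hmem : ∀ r : ℕ × ℕ,
        sᶜ.indicator P ((fun r : ℕ × ℕ => ((r.1 + r.2 + 1, r.2) : ℕ × ℕ)) r)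
          = P (r.1 + r.2 + 1, r.2) := by
      intro r
      exact Set.indicator_of_mem (by simp only [hs, Set.mem_compl_iff, Set.mem_setOf_eq]; omega) P
    rw [tsum_congr hmem,
      ← (Equiv.prodComm ℕ ℕ).tsum_eq (fun r : ℕ × ℕ => P (r.1 + r.2 + 1, r.2)), Xs]
    apply tsum_congr
    intro r
    simp only [Equiv.prodComm_apply, Prod.fst_swap, Prod.snd_swap]
    rw [show r.2 + r.1 + 1 = r.1 + r.2 + 1 from by omega]
    simp only [hPdef, Hw, Vw]
    push_cast
    ring
  rw [hsplit, h1, h2]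

/-- The cross-term sum via the symmetric pairing. -/
noncomputable def Dfun (q : ℂ) (p : ℕ × ℕ) : ℂ :=
  (((p.1 : ℂ) + 1) ^ 2 * u q p.1) * (((p.2 : ℂ) + 1) ^ 4 * u q p.2)
    - (((p.1 : ℂ) + 1) ^ 3 * u q p.1) * (((p.2 : ℂ) + 1) ^ 3 * u q p.2)

lemma stepE2 (hq : ‖q‖ < 1) :
    Phi 2 q * Phi 4 q - Phi 3 q * Phi 3 q = Xs q := by
  have hsum33 := S_prod hq 3 3 (by norm_num) (by norm_num)
  have hsum24 := S_prod hq 2 4 (by norm_num) (by norm_num)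
  have hD : Summable (Dfun q) := hsum24.sub hsum33
  have hDswap : Summable (fun p : ℕ × ℕ => Dfun q (p.2, p.1)) :=
    (Equiv.prodComm ℕ ℕ).summable_iff.mpr hD
  have h1 : Phi 2 q * Phi 4 q - Phi 3 q * Phi 3 q = ∑' p : ℕ × ℕ, Dfun q p := by
    rw [prod_eq hq 2 4 (by norm_num) (by norm_num), prod_eq hq 3 3 (by norm_num) (by norm_num),
      ← Summable.tsum_sub hsum24 hsum33]
    exact tsum_congr fun p => rfl
  have hsw : ∑' p : ℕ × ℕ, Dfun q p = ∑' p : ℕ × ℕ, Dfun q (p.2, p.1) :=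
    ((Equiv.prodComm ℕ ℕ).tsum_eq (Dfun q)).symm
  have h2 : (∑' p : ℕ × ℕ, Dfun q p) + (∑' p : ℕ × ℕ, Dfun q p)
      = ∑' p : ℕ × ℕ, Hw p * (u q p.1 * u q p.2) := by
    nth_rewrite 2 [hsw]
    rw [← Summable.tsum_add hD hDswap]
    exact tsum_congr fun p => by simp only [Dfun, Hw]; ring
  have key : (Phi 2 q * Phi 4 q - Phi 3 q * Phi 3 q)
      + (Phi 2 q * Phi 4 q - Phi 3 q * Phi 3 q) = Xs q + Xs q := by
    rw [h1, h2, split_P hq]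
  linear_combination key / 2

lemma stepE3 (hq : ‖q‖ < 1) : Ts q = (Phi 7 q - Phi 3 q) / 60 := by
  have h1 : Ts q = ∑' n : ℕ, ((((n : ℂ) + 2) ^ 7 - ((n : ℂ) + 2) ^ 3) / 60) * u q (n + 1) := by
    rw [Ts, tsum_antidiag (S_T3 hq)]
    apply tsum_congr
    intro n
    have hterm : ∀ kl ∈ Finset.HasAntidiagonal.antidiagonal n,
        Ww kl * u q (kl.1 + kl.2 + 1) = Ww kl * u q (n + 1) := by
      intro kl hkl
      rw [Finset.HasAntidiagonal.mem_antidiagonal] at hkl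
      rw [hkl]
    rw [Finset.sum_congr rfl hterm, ← Finset.sum_mul, FIN n]
  have hg : Summable (fun n : ℕ => (((n : ℂ) + 1) ^ 7 - ((n : ℂ) + 1) ^ 3) * u q n) :=
    ((summable_f hq 7).sub (summable_f hq 3)).congr fun n => by ring
  have h2 : Phi 7 q - Phi 3 q = ∑' n : ℕ, (((n : ℂ) + 1) ^ 7 - ((n : ℂ) + 1) ^ 3) * u q n := by
    rw [Phi_eq 7 q, Phi_eq 3 q, ← Summable.tsum_sub (summable_f hq 7) (summable_f hq 3)]
    exact tsum_congr fun n => by ring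
  have h3 : ∑' n : ℕ, (((n : ℂ) + 1) ^ 7 - ((n : ℂ) + 1) ^ 3) * u q n
      = ∑' n : ℕ, (((n : ℂ) + 2) ^ 7 - ((n : ℂ) + 2) ^ 3) * u q (n + 1) := by
    rw [Summable.tsum_eq_zero_add hg]
    have h0 : ((((0 : ℕ) : ℂ) + 1) ^ 7 - (((0 : ℕ) : ℂ) + 1) ^ 3) * u q 0 = 0 := by norm_num
    rw [h0, zero_add]
    exact tsum_congr fun n => by push_cast; ring
  have h4 : ∑' n : ℕ, ((((n : ℂ) + 2) ^ 7 - ((n : ℂ) + 2) ^ 3) / 60) * u q (n + 1)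
      = (1 / 60 : ℂ) * ∑' n : ℕ, (((n : ℂ) + 2) ^ 7 - ((n : ℂ) + 2) ^ 3) * u q (n + 1) := by
    rw [← tsum_mul_left]
    exact tsum_congr fun n => by ring
  rw [h1, h4, ← h3, ← h2]
  ring

end Phi7Aux

/-- With Q = 1 + 240Φ₃, Φ₇ = (Q² − 1)/480 for |q| < 1. -/
theorem Phi7_eval (q : ℂ) (hq : ‖q‖ < 1) :
    Phi 7 q = ((1 + 240 * Phi 3 q) ^ 2 - 1) / 480 := by
  have h1 := Phi7Aux.stepE1 hq
  have h2 := Phi7Aux.stepE2 hq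
  have h3 := Phi7Aux.stepE3 hq
  have key : 2 * (Phi 3 q * Phi 3 q) = (Phi 7 q - Phi 3 q) / 60 := by
    linear_combination h1 - h2 + h3
  linear_combination (-60 : ℂ) * key
end

section
/- Define Φ_ν(q) = ∑_{n=1}^∞ n^ν q^n/(1−q^n) for |q| < 1, Q(q) = 1 + 240·Φ₃(q), and R(q) = 1 − 504·Φ₅(q). Then Φ₁₁(q) = (−691 + 441·Q(q)³ + 250·R(q)²)/65520. -/
open Finset

namespace PhiAux

/-- pairs (d,x) with d*x = n, both positive -/
def S2 (n : ℕ) : Finset (ℕ × ℕ) :=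
  (range (n+1) ×ˢ range (n+1)).filter fun p => 0 < p.1 ∧ 0 < p.2 ∧ p.1 * p.2 = n

/-- quadruples ((a,x),(b,y)) with a*x + b*y = n, all positive -/
def S4 (n : ℕ) : Finset ((ℕ × ℕ) × (ℕ × ℕ)) :=
  ((range (n+1) ×ˢ range (n+1)) ×ˢ (range (n+1) ×ˢ range (n+1))).filter
    fun s => 0 < s.1.1 ∧ 0 < s.1.2 ∧ 0 < s.2.1 ∧ 0 < s.2.2 ∧ s.1.1 * s.1.2 + s.2.1 * s.2.2 = n

lemma mem_S2 {n : ℕ} {p : ℕ × ℕ} :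
    p ∈ S2 n ↔ 0 < p.1 ∧ 0 < p.2 ∧ p.1 * p.2 = n := by
  simp only [S2, mem_filter, mem_product, mem_range]
  constructor
  · rintro ⟨_, h⟩; exact h
  · rintro ⟨h1, h2, h3⟩
    have l1 : p.1 ≤ p.1 * p.2 := Nat.le_mul_of_pos_right _ h2
    have l2 : p.2 ≤ p.1 * p.2 := Nat.le_mul_of_pos_left _ h1
    exact ⟨⟨by omega, by omega⟩, h1, h2, h3⟩

lemma mem_S4 {n : ℕ} {s : (ℕ × ℕ) × (ℕ × ℕ)} :
    s ∈ S4 n ↔ 0 < s.1.1 ∧ 0 < s.1.2 ∧ 0 < s.2.1 ∧ 0 < s.2.2 ∧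
      s.1.1 * s.1.2 + s.2.1 * s.2.2 = n := by
  simp only [S4, mem_filter, mem_product, mem_range]
  constructor
  · rintro ⟨_, h⟩; exact h
  · rintro ⟨h1, h2, h3, h4, h5⟩
    have l1 : s.1.1 ≤ s.1.1 * s.1.2 := Nat.le_mul_of_pos_right _ h2
    have l2 : s.1.2 ≤ s.1.1 * s.1.2 := Nat.le_mul_of_pos_left _ h1
    have l3 : s.2.1 ≤ s.2.1 * s.2.2 := Nat.le_mul_of_pos_right _ h4
    have l4 : s.2.2 ≤ s.2.1 * s.2.2 := Nat.le_mul_of_pos_left _ h3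
    exact ⟨⟨⟨by omega, by omega⟩, by omega, by omega⟩, h1, h2, h3, h4, h5⟩

/-- trichotomy split of a sum over a finset -/
lemma tri {ι : Type*} [DecidableEq ι] (t : Finset ι) (u v : ι → ℕ) (F : ι → ℤ) :
    ∑ s ∈ t, F s =
      ∑ s ∈ t.filter (fun s => v s < u s), F s +
      ∑ s ∈ t.filter (fun s => u s < v s), F s +
      ∑ s ∈ t.filter (fun s => u s = v s), F s := by
  classical
  rw [← Finset.sum_filter_add_sum_filter_not t (fun s => v s < u s) F]
  have h2 : ∑ s ∈ t.filter (fun s => ¬ v s < u s), F s =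
      ∑ s ∈ t.filter (fun s => u s < v s), F s +
      ∑ s ∈ t.filter (fun s => u s = v s), F s := by
    rw [← Finset.sum_filter_add_sum_filter_not (t.filter (fun s => ¬ v s < u s))
      (fun s => u s < v s) F, Finset.filter_filter, Finset.filter_filter]
    congr 1
    · apply Finset.sum_congr _ (fun _ _ => rfl)
      apply Finset.filter_congr; intro x _; omega
    · apply Finset.sum_congr _ (fun _ _ => rfl)
      apply Finset.filter_congr; intro x _; omega
  rw [h2]; ring

/-- swap symmetry of S4 -/
lemma swap_S4 (n : ℕ) (F : (ℕ × ℕ) × (ℕ × ℕ) → ℤ)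
    (pr pr' : (ℕ × ℕ) × (ℕ × ℕ) → Prop) [DecidablePred pr] [DecidablePred pr']
    (hpr : ∀ s, pr' s ↔ pr (s.2, s.1)) :
    ∑ s ∈ (S4 n).filter pr, F s = ∑ s ∈ (S4 n).filter pr', F (s.2, s.1) := by
  apply Finset.sum_nbij' (fun s => (s.2, s.1)) (fun s => (s.2, s.1))
  · rintro ⟨⟨a, x⟩, b, y⟩ hs
    rw [mem_filter, mem_S4] at hs ⊢
    dsimp only at hs ⊢
    obtain ⟨⟨ha, hx, hb, hy, heq⟩, h2⟩ := hs
    exact ⟨⟨hb, hy, ha, hx, by omega⟩, (hpr _).mpr h2⟩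
  · rintro ⟨⟨a, x⟩, b, y⟩ hs
    rw [mem_filter, mem_S4] at hs ⊢
    dsimp only at hs ⊢
    obtain ⟨⟨ha, hx, hb, hy, heq⟩, h2⟩ := hs
    exact ⟨⟨hb, hy, ha, hx, by omega⟩, (hpr _).mp h2⟩
  · intro s _; rfl
  · intro s _; rfl
  · intro s _; rfl

/-- the key Liouville-style bijection between the region x > y and the region a < b -/
lemma psi_S4 (n : ℕ) (F : (ℕ × ℕ) × (ℕ × ℕ) → ℤ) :
    ∑ s ∈ (S4 n).filter (fun s => s.2.2 < s.1.2), F s =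
    ∑ s ∈ (S4 n).filter (fun s => s.1.1 < s.2.1),
      F ((s.1.1, s.1.2 + s.2.2), (s.2.1 - s.1.1, s.2.2)) := by
  apply Finset.sum_nbij' (fun s => ((s.1.1, s.1.2 - s.2.2), (s.1.1 + s.2.1, s.2.2)))
    (fun s => ((s.1.1, s.1.2 + s.2.2), (s.2.1 - s.1.1, s.2.2)))
  · rintro ⟨⟨a, x⟩, b, y⟩ hs
    rw [mem_filter, mem_S4] at hs ⊢
    dsimp only at hs ⊢
    obtain ⟨⟨ha, hx, hb, hy, heq⟩, hlt⟩ := hs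
    have hxy : x - y + y = x := Nat.sub_add_cancel hlt.le
    have harith : a * (x - y) + (a + b) * y = a * x + b * y := by
      calc a * (x - y) + (a + b) * y = a * ((x - y) + y) + b * y := by ring
        _ = a * x + b * y := by rw [hxy]
    exact ⟨⟨ha, by omega, by omega, hy, by omega⟩, by omega⟩
  · rintro ⟨⟨a, x⟩, b, y⟩ hs
    rw [mem_filter, mem_S4] at hs ⊢
    dsimp only at hs ⊢
    obtain ⟨⟨ha, hx, hb, hy, heq⟩, hlt⟩ := hs
    have hba : b - a + a = b := Nat.sub_add_cancel hlt.le
    have harith : a * (x + y) + (b - a) * y = a * x + b * y := by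
      calc a * (x + y) + (b - a) * y = a * x + ((b - a) + a) * y := by ring
        _ = a * x + b * y := by rw [hba]
    exact ⟨⟨ha, by omega, by omega, hy, by omega⟩, by omega⟩
  · rintro ⟨⟨a, x⟩, b, y⟩ hs
    rw [mem_filter, mem_S4] at hs
    dsimp only at hs ⊢
    obtain ⟨⟨ha, hx, hb, hy, heq⟩, hlt⟩ := hs
    have h1 : x - y + y = x := by omega
    have h2 : a + b - a = b := by omega
    rw [h1, h2]
  · rintro ⟨⟨a, x⟩, b, y⟩ hs
    rw [mem_filter, mem_S4] at hs
    dsimp only at hs ⊢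
    obtain ⟨⟨ha, hx, hb, hy, heq⟩, hlt⟩ := hs
    have h1 : x + y - y = x := by omega
    have h2 : a + (b - a) = b := by omega
    rw [h1, h2]
  · rintro ⟨⟨a, x⟩, b, y⟩ hs
    rw [mem_filter, mem_S4] at hs
    dsimp only at hs ⊢
    obtain ⟨⟨ha, hx, hb, hy, heq⟩, hlt⟩ := hs
    have h1 : x - y + y = x := by omega
    have h2 : a + b - (a) = b := by omega
    rw [h1, h2]

/-- the diagonal x = y reindexed as a sum over divisor pairs -/
lemma diag_S4 (n : ℕ) (G : ℤ → ℤ → ℤ) :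
    ∑ s ∈ (S4 n).filter (fun s => s.1.2 = s.2.2), G s.1.1 s.2.1 =
    ∑ p ∈ S2 n, ∑ a ∈ Ico 1 p.1, G a ((p.1 : ℤ) - a) := by
  rw [← Finset.sum_sigma (S2 n) (fun p => Ico 1 p.1) (fun z => G z.2 ((z.1.1 : ℤ) - z.2))]
  apply Finset.sum_nbij' (fun s => (⟨(s.1.1 + s.2.1, s.1.2), s.1.1⟩ :
      (p : ℕ × ℕ) × ℕ))
    (fun z => ((z.2, z.1.2), (z.1.1 - z.2, z.1.2)))
  · rintro ⟨⟨a, x⟩, b, y⟩ hs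
    rw [mem_filter, mem_S4] at hs
    dsimp only at hs
    obtain ⟨⟨ha, hx, hb, hy, heq⟩, hd⟩ := hs
    subst hd
    rw [Finset.mem_sigma, mem_S2, Finset.mem_Ico]
    dsimp only
    have harith : (a + b) * x = n := by
      calc (a + b) * x = a * x + b * x := by ring
        _ = n := heq
    exact ⟨⟨by omega, by omega, harith⟩, by omega, by omega⟩
  · rintro ⟨⟨d, t⟩, a⟩ hz
    rw [Finset.mem_sigma, mem_S2, Finset.mem_Ico] at hz
    dsimp only at hz
    obtain ⟨⟨hd, ht, heq⟩, ha1, ha2⟩ := hz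
    rw [mem_filter, mem_S4]
    dsimp only
    have harith : a * t + (d - a) * t = n := by
      calc a * t + (d - a) * t = (a + (d - a)) * t := by ring
        _ = d * t := by congr 1; omega
        _ = n := heq
    exact ⟨⟨by omega, ht, by omega, ht, harith⟩, rfl⟩
  · rintro ⟨⟨a, x⟩, b, y⟩ hs
    rw [mem_filter, mem_S4] at hs
    dsimp only at hs ⊢
    obtain ⟨⟨ha, hx, hb, hy, heq⟩, hd⟩ := hs
    have h2 : a + b - a = b := by omega
    rw [h2, ← hd]
  · rintro ⟨⟨d, t⟩, a⟩ hz
    rw [Finset.mem_sigma, mem_S2, Finset.mem_Ico] at hz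
    dsimp only at hz ⊢
    obtain ⟨⟨hd, ht, heq⟩, ha1, ha2⟩ := hz
    have h2 : a + (d - a) = d := by omega
    rw [h2]
  · rintro ⟨⟨a, x⟩, b, y⟩ hs
    rw [mem_filter, mem_S4] at hs
    dsimp only at hs ⊢
    obtain ⟨⟨ha, hx, hb, hy, heq⟩, hd⟩ := hs
    have h3 : ((a + b : ℕ) : ℤ) - (a : ℤ) = (b : ℤ) := by push_cast; ring
    rw [h3]

/-- The core Liouville-machine identity. -/
theorem core (P Q : ℤ → ℤ → ℤ) (hsym : ∀ a b, P a b = P b a)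
    (hkey : ∀ a c : ℤ, Q a (a + c) + Q (a + c) a = -2 * P a c)
    (hdiag : ∀ a, Q a a = 0) (n : ℕ) :
    ∑ s ∈ S4 n, (P s.1.1 s.2.1 + Q s.1.1 s.2.1) =
    ∑ p ∈ S2 n, ∑ a ∈ Ico 1 p.1, P a ((p.1 : ℤ) - a) := by
  classical
  set F : (ℕ × ℕ) × (ℕ × ℕ) → ℤ := fun s => P s.1.1 s.2.1 with hF
  set Fq : (ℕ × ℕ) × (ℕ × ℕ) → ℤ := fun s => Q s.1.1 s.2.1 with hFq
  -- trichotomy in x,y for F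
  have e1 : ∑ s ∈ S4 n, F s =
      ∑ s ∈ (S4 n).filter (fun s => s.2.2 < s.1.2), F s +
      ∑ s ∈ (S4 n).filter (fun s => s.1.2 < s.2.2), F s +
      ∑ s ∈ (S4 n).filter (fun s => s.1.2 = s.2.2), F s :=
    tri (S4 n) (fun s => s.1.2) (fun s => s.2.2) F
  -- the x<y region equals the x>y region by the swap
  have e2 : ∑ s ∈ (S4 n).filter (fun s => s.1.2 < s.2.2), F s =
      ∑ s ∈ (S4 n).filter (fun s => s.2.2 < s.1.2), F s := by
    rw [swap_S4 n F (fun s => s.1.2 < s.2.2) (fun s => s.2.2 < s.1.2) (fun s => Iff.rfl)]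
    apply Finset.sum_congr rfl
    intro s _
    exact (hsym _ _).symm
  -- trichotomy in a,b for Fq
  have e3 : ∑ s ∈ S4 n, Fq s =
      ∑ s ∈ (S4 n).filter (fun s => s.2.1 < s.1.1), Fq s +
      ∑ s ∈ (S4 n).filter (fun s => s.1.1 < s.2.1), Fq s +
      ∑ s ∈ (S4 n).filter (fun s => s.1.1 = s.2.1), Fq s :=
    tri (S4 n) (fun s => s.1.1) (fun s => s.2.1) Fq
  have e3a : ∑ s ∈ (S4 n).filter (fun s => s.2.1 < s.1.1), Fq s =
      ∑ s ∈ (S4 n).filter (fun s => s.1.1 < s.2.1), Q s.2.1 s.1.1 := by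
    rw [swap_S4 n Fq (fun s => s.2.1 < s.1.1) (fun s => s.1.1 < s.2.1) (fun s => Iff.rfl)]
  have e3b : ∑ s ∈ (S4 n).filter (fun s => s.1.1 = s.2.1), Fq s = 0 := by
    apply Finset.sum_eq_zero
    intro s hs
    rw [mem_filter] at hs
    simp only [hFq, hs.2]
    exact hdiag _
  -- the psi bijection applied to -2 * F
  have e4 : ∑ s ∈ (S4 n).filter (fun s => s.2.2 < s.1.2), (-2 * F s) =
      ∑ s ∈ (S4 n).filter (fun s => s.1.1 < s.2.1),
        (-2) * P s.1.1 ((s.2.1 : ℕ) - s.1.1 : ℕ) :=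
    psi_S4 n (fun s => -2 * F s)
  -- rewrite the right side of e4 via hkey
  have e5 : ∑ s ∈ (S4 n).filter (fun s => s.1.1 < s.2.1),
        (-2) * P s.1.1 ((s.2.1 : ℕ) - s.1.1 : ℕ) =
      ∑ s ∈ (S4 n).filter (fun s => s.1.1 < s.2.1), (Q s.1.1 s.2.1 + Q s.2.1 s.1.1) := by
    apply Finset.sum_congr rfl
    intro s hs
    rw [mem_filter] at hs
    have hle : (s.1.1 : ℕ) ≤ s.2.1 := hs.2.le
    have hc : ((s.2.1 - s.1.1 : ℕ) : ℤ) = (s.2.1 : ℤ) - s.1.1 := by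
      push_cast [Nat.cast_sub hle]; ring
    rw [hc]
    have := hkey (s.1.1 : ℤ) ((s.2.1 : ℤ) - s.1.1)
    have harg : (s.1.1 : ℤ) + ((s.2.1 : ℤ) - s.1.1) = s.2.1 := by ring
    rw [harg] at this
    omega
  have e6 : ∑ s ∈ (S4 n).filter (fun s => s.2.2 < s.1.2), (-2 * F s) =
      -2 * ∑ s ∈ (S4 n).filter (fun s => s.2.2 < s.1.2), F s := by
    rw [Finset.mul_sum]
  have e7 : ∑ s ∈ (S4 n).filter (fun s => s.1.2 = s.2.2), F s =
      ∑ p ∈ S2 n, ∑ a ∈ Ico 1 p.1, P a ((p.1 : ℤ) - a) := diag_S4 n P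
  have e8 : ∑ s ∈ S4 n, (P s.1.1 s.2.1 + Q s.1.1 s.2.1) =
      ∑ s ∈ S4 n, F s + ∑ s ∈ S4 n, Fq s := by
    rw [← Finset.sum_add_distrib]
  have e9 : ∑ s ∈ (S4 n).filter (fun s => s.1.1 < s.2.1), (Q s.1.1 s.2.1 + Q s.2.1 s.1.1) =
      ∑ s ∈ (S4 n).filter (fun s => s.1.1 < s.2.1), Fq s +
      ∑ s ∈ (S4 n).filter (fun s => s.1.1 < s.2.1), Q s.2.1 s.1.1 := by
    rw [← Finset.sum_add_distrib]
  omega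

end PhiAux

namespace PhiAux
open Finset

noncomputable section

def P8 (a b : ℤ) : ℤ := 30*a^2*b^2*(a+b)^2
def Q8 (a b : ℤ) : ℤ := -30*a^2*b^2*(a-b)^2

def P12 (a b : ℤ) : ℤ :=
  630*a^2*b^8 + 2520*a^3*b^7 + 5040*a^4*b^6 + 6300*a^5*b^5 + 5040*a^6*b^4
    + 2520*a^7*b^3 + 630*a^8*b^2
def Q12 (a b : ℤ) : ℤ :=
  -630*a^2*b^8 + 2520*a^3*b^7 - 5040*a^4*b^6 + 6300*a^5*b^5 - 5040*a^6*b^4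
    + 2520*a^7*b^3 - 630*a^8*b^2

lemma faul8_aux (m : ℕ) (e : ℤ) :
    ∑ a ∈ Ico 1 (m+1), P8 (a : ℤ) (e - (a : ℤ)) =
      (-1)*(m:ℤ)^1*e^2 + (5)*(m:ℤ)^1*e^4 + (-15)*(m:ℤ)^2*e^3 + (15)*(m:ℤ)^2*e^4
      + (10)*(m:ℤ)^3*e^2 + (-30)*(m:ℤ)^3*e^3 + (10)*(m:ℤ)^3*e^4 + (15)*(m:ℤ)^4*e^2
      + (-15)*(m:ℤ)^4*e^3 + (6)*(m:ℤ)^5*e^2 := by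
  induction m with
  | zero => simp
  | succ k ih =>
    rw [Finset.sum_Ico_succ_top (by omega : 1 ≤ k + 1)]
    rw [ih]
    simp only [P8]
    push_cast
    ring

lemma faul8 (d : ℕ) :
    ∑ a ∈ Ico 1 d, P8 (a : ℤ) ((d : ℤ) - (a : ℤ)) = (d:ℤ)^7 - (d:ℤ)^3 := by
  rcases d with _ | m
  · simp
  · rw [faul8_aux m ((m+1 : ℕ) : ℤ)]
    push_cast
    ring

lemma faul12_aux (m : ℕ) (e : ℤ) :
    ∑ a ∈ Ico 1 (m+1), P12 (a : ℤ) (e - (a : ℤ)) =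
      (-21)*(m:ℤ)^1*e^2 + (120)*(m:ℤ)^1*e^4 + (-168)*(m:ℤ)^1*e^6 + (105)*(m:ℤ)^1*e^8
      + (-210)*(m:ℤ)^2*e^3 + (525)*(m:ℤ)^2*e^5 + (-630)*(m:ℤ)^2*e^7 + (315)*(m:ℤ)^2*e^8
      + (140)*(m:ℤ)^3*e^2 + (-840)*(m:ℤ)^3*e^4 + (1680)*(m:ℤ)^3*e^6 + (-1260)*(m:ℤ)^3*e^7
      + (210)*(m:ℤ)^3*e^8 + (735)*(m:ℤ)^4*e^3 + (-2625)*(m:ℤ)^4*e^5 + (2520)*(m:ℤ)^4*e^6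
      + (-630)*(m:ℤ)^4*e^7 + (-294)*(m:ℤ)^5*e^2 + (2520)*(m:ℤ)^5*e^4 + (-3150)*(m:ℤ)^5*e^5
      + (1008)*(m:ℤ)^5*e^6 + (-1470)*(m:ℤ)^6*e^3 + (2520)*(m:ℤ)^6*e^4 + (-1050)*(m:ℤ)^6*e^5
      + (420)*(m:ℤ)^7*e^2 + (-1260)*(m:ℤ)^7*e^3 + (720)*(m:ℤ)^7*e^4 + (315)*(m:ℤ)^8*e^2
      + (-315)*(m:ℤ)^8*e^3 + (70)*(m:ℤ)^9*e^2 := by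
  induction m with
  | zero => simp
  | succ k ih =>
    rw [Finset.sum_Ico_succ_top (by omega : 1 ≤ k + 1)]
    rw [ih]
    simp only [P12]
    push_cast
    ring

lemma faul12 (d : ℕ) :
    ∑ a ∈ Ico 1 d, P12 (a : ℤ) ((d : ℤ) - (a : ℤ)) =
      13*(d:ℤ)^11 - 42*(d:ℤ)^7 + 50*(d:ℤ)^5 - 21*(d:ℤ)^3 := by
  rcases d with _ | m
  · simp
  · rw [faul12_aux m ((m+1 : ℕ) : ℤ)]
    push_cast
    ring

/-- weight-8 convolution identity -/
theorem W8 (n : ℕ) :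
    ∑ s ∈ S4 n, (120 * (s.1.1:ℤ)^3 * (s.2.1:ℤ)^3) =
    ∑ p ∈ S2 n, ((p.1:ℤ)^7 - (p.1:ℤ)^3) := by
  have h := core P8 Q8 (fun a b => by unfold P8; ring)
    (fun a c => by unfold Q8 P8; ring) (fun a => by unfold Q8; ring) n
  have h1 : ∑ s ∈ S4 n, (120 * (s.1.1:ℤ)^3 * (s.2.1:ℤ)^3) =
      ∑ s ∈ S4 n, (P8 s.1.1 s.2.1 + Q8 s.1.1 s.2.1) := by
    apply Finset.sum_congr rfl
    intro s _
    unfold P8 Q8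
    ring
  rw [h1, h]
  apply Finset.sum_congr rfl
  intro p _
  exact faul8 p.1

/-- weight-12 convolution identity -/
theorem W12 (n : ℕ) :
    ∑ s ∈ S4 n, (5040 * (s.1.1:ℤ)^3 * (s.2.1:ℤ)^7 + 5040 * (s.1.1:ℤ)^7 * (s.2.1:ℤ)^3
      + 12600 * (s.1.1:ℤ)^5 * (s.2.1:ℤ)^5) =
    ∑ p ∈ S2 n, (13*(p.1:ℤ)^11 - 42*(p.1:ℤ)^7 + 50*(p.1:ℤ)^5 - 21*(p.1:ℤ)^3) := by
  have h := core P12 Q12 (fun a b => by unfold P12; ring)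
    (fun a c => by unfold Q12 P12; ring) (fun a => by unfold Q12; ring) n
  have h1 : ∑ s ∈ S4 n, (5040 * (s.1.1:ℤ)^3 * (s.2.1:ℤ)^7 + 5040 * (s.1.1:ℤ)^7 * (s.2.1:ℤ)^3
      + 12600 * (s.1.1:ℤ)^5 * (s.2.1:ℤ)^5) =
      ∑ s ∈ S4 n, (P12 s.1.1 s.2.1 + Q12 s.1.1 s.2.1) := by
    apply Finset.sum_congr rfl
    intro s _
    unfold P12 Q12
    ring
  rw [h1, h]
  apply Finset.sum_congr rfl
  intro p _
  exact faul12 p.1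

end
end PhiAux


namespace PhiAux
open Finset

def T2 (N : ℕ) : Finset (ℕ × ℕ) :=
  (range N ×ˢ range N).filter fun p => (p.1+1)*(p.2+1) = N

def T4 (N : ℕ) : Finset ((ℕ × ℕ) × (ℕ × ℕ)) :=
  ((range N ×ˢ range N) ×ˢ (range N ×ˢ range N)).filter
    fun z => (z.1.1+1)*(z.1.2+1) + (z.2.1+1)*(z.2.2+1) = N

lemma mem_T2 {N : ℕ} {p : ℕ × ℕ} : p ∈ T2 N ↔ (p.1+1)*(p.2+1) = N := by
  simp only [T2, mem_filter, mem_product, mem_range]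
  constructor
  · rintro ⟨_, h⟩; exact h
  · intro h
    have l1 : p.1 + 1 ≤ (p.1+1) * (p.2+1) := Nat.le_mul_of_pos_right _ (by omega)
    have l2 : p.2 + 1 ≤ (p.1+1) * (p.2+1) := Nat.le_mul_of_pos_left _ (by omega)
    exact ⟨⟨by omega, by omega⟩, h⟩

lemma mem_T4 {N : ℕ} {z : (ℕ × ℕ) × (ℕ × ℕ)} :
    z ∈ T4 N ↔ (z.1.1+1)*(z.1.2+1) + (z.2.1+1)*(z.2.2+1) = N := by
  simp only [T4, mem_filter, mem_product, mem_range]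
  constructor
  · rintro ⟨_, h⟩; exact h
  · intro h
    have l1 : z.1.1 + 1 ≤ (z.1.1+1) * (z.1.2+1) := Nat.le_mul_of_pos_right _ (by omega)
    have l2 : z.1.2 + 1 ≤ (z.1.1+1) * (z.1.2+1) := Nat.le_mul_of_pos_left _ (by omega)
    have l3 : z.2.1 + 1 ≤ (z.2.1+1) * (z.2.2+1) := Nat.le_mul_of_pos_right _ (by omega)
    have l4 : z.2.2 + 1 ≤ (z.2.1+1) * (z.2.2+1) := Nat.le_mul_of_pos_left _ (by omega)
    exact ⟨⟨⟨by omega, by omega⟩, by omega, by omega⟩, h⟩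

/-- translate sums over T2 to sums over S2 -/
lemma sum_T2_S2 (N : ℕ) (F : ℕ → ℕ → ℂ) :
    ∑ p ∈ T2 N, F (p.1+1) (p.2+1) = ∑ p ∈ S2 N, F p.1 p.2 := by
  apply Finset.sum_nbij' (fun p => (p.1+1, p.2+1)) (fun p => (p.1-1, p.2-1))
  · rintro ⟨d, t⟩ hp
    rw [mem_T2] at hp
    rw [mem_S2]
    dsimp only at hp ⊢
    exact ⟨by omega, by omega, hp⟩
  · rintro ⟨d, t⟩ hp
    rw [mem_S2] at hp
    dsimp only at hp
    obtain ⟨hd, ht, heq⟩ := hp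
    rw [mem_T2]
    dsimp only
    have h1 : d - 1 + 1 = d := by omega
    have h2 : t - 1 + 1 = t := by omega
    rw [h1, h2]; exact heq
  · rintro ⟨d, t⟩ _; simp
  · rintro ⟨d, t⟩ hp
    rw [mem_S2] at hp
    dsimp only at hp
    have h1 : d - 1 + 1 = d := by omega
    have h2 : t - 1 + 1 = t := by omega
    simp only [Prod.mk.injEq]
    exact ⟨h1, h2⟩
  · rintro ⟨d, t⟩ _; rfl

/-- translate sums over T4 to sums over S4 -/
lemma sum_T4_S4 (N : ℕ) (F : ℕ → ℕ → ℂ) :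
    ∑ z ∈ T4 N, F (z.1.1+1) (z.2.1+1) = ∑ s ∈ S4 N, F s.1.1 s.2.1 := by
  apply Finset.sum_nbij' (fun z => ((z.1.1+1, z.1.2+1), (z.2.1+1, z.2.2+1)))
    (fun s => ((s.1.1-1, s.1.2-1), (s.2.1-1, s.2.2-1)))
  · rintro ⟨⟨a, x⟩, b, y⟩ hz
    rw [mem_T4] at hz
    rw [mem_S4]
    dsimp only at hz ⊢
    exact ⟨by omega, by omega, by omega, by omega, hz⟩
  · rintro ⟨⟨a, x⟩, b, y⟩ hs
    rw [mem_S4] at hs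
    dsimp only at hs
    obtain ⟨ha, hx, hb, hy, heq⟩ := hs
    rw [mem_T4]
    dsimp only
    have h1 : a - 1 + 1 = a := by omega
    have h2 : x - 1 + 1 = x := by omega
    have h3 : b - 1 + 1 = b := by omega
    have h4 : y - 1 + 1 = y := by omega
    rw [h1, h2, h3, h4]; exact heq
  · rintro ⟨⟨a, x⟩, b, y⟩ _; simp
  · rintro ⟨⟨a, x⟩, b, y⟩ hs
    rw [mem_S4] at hs
    dsimp only at hs
    obtain ⟨ha, hx, hb, hy, heq⟩ := hs
    simp only [Prod.mk.injEq]
    refine ⟨⟨by omega, by omega⟩, by omega, by omega⟩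
  · rintro ⟨⟨a, x⟩, b, y⟩ _; rfl

section Analysis

variable {q : ℂ}

lemma summable2 (ν : ℕ) (hq : ‖q‖ < 1) :
    Summable (fun p : ℕ × ℕ => ‖((p.1:ℂ)+1)^ν * q ^ ((p.1+1)*(p.2+1))‖) := by
  have hq0 : (0:ℝ) ≤ ‖q‖ := norm_nonneg q
  have h1 : Summable (fun d : ℕ => ((d:ℝ)+1)^ν * ‖q‖^(d+1)) := by
    have h0 := summable_pow_mul_geometric_of_norm_lt_one (R := ℝ) ν (r := ‖q‖) (by simpa using hq)
    have h2 := h0.comp_injective Nat.succ_injective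
    apply h2.congr
    intro d
    simp only [Function.comp, Nat.succ_eq_add_one]
    push_cast
    ring
  have h3 : Summable (fun e : ℕ => ‖q‖ ^ e) := summable_geometric_of_lt_one hq0 hq
  have h4 := h1.mul_of_nonneg h3 (fun d => by positivity) (fun e => by positivity)
  apply Summable.of_nonneg_of_le (fun p => norm_nonneg _) _ h4
  intro p
  rw [norm_mul, norm_pow, norm_pow]
  have e1 : ‖(p.1:ℂ)+1‖ = (p.1:ℝ)+1 := by
    rw [show ((p.1:ℂ)+1) = ((p.1+1 : ℕ):ℂ) by push_cast; ring, Complex.norm_natCast]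
    push_cast; ring
  rw [e1]
  rw [mul_assoc, ← pow_add]
  apply mul_le_mul_of_nonneg_left _ (by positivity)
  apply pow_le_pow_of_le_one hq0 hq.le
  have hexp : (p.1+1)*(p.2+1) = (p.1+1)*p.2 + (p.1+1) := by ring
  have hge : p.2 ≤ (p.1+1)*p.2 := Nat.le_mul_of_pos_left _ (by omega)
  omega

lemma phi_eq (ν : ℕ) (hq : ‖q‖ < 1) :
    Phi ν q = ∑' p : ℕ × ℕ, ((p.1:ℂ)+1)^ν * q ^ ((p.1+1)*(p.2+1)) := by
  have hsum := (summable2 ν hq).of_norm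
  have hrow : ∀ d : ℕ, HasSum (fun e => ((d:ℂ)+1)^ν * q^((d+1)*(e+1)))
      (((d:ℂ)+1)^ν * q^(d+1) / (1 - q^(d+1))) := by
    intro d
    have hlt : ‖q^(d+1)‖ < 1 := by
      rw [norm_pow]; exact pow_lt_one₀ (norm_nonneg q) hq (Nat.succ_ne_zero d)
    have h := (hasSum_geometric_of_norm_lt_one hlt).mul_left (((d:ℂ)+1)^ν * q^(d+1))
    have hfun : (fun e : ℕ => (((d:ℂ)+1)^ν * q^(d+1)) * (q^(d+1))^e) =
        (fun e : ℕ => ((d:ℂ)+1)^ν * q^((d+1)*(e+1))) := by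
      funext e
      rw [← pow_mul, mul_assoc, ← pow_add]
      have hexp : (d+1) + (d+1)*e = (d+1)*(e+1) := by ring
      rw [hexp]
    rw [hfun] at h
    rw [div_eq_mul_inv]
    exact h
  unfold Phi
  rw [Summable.tsum_prod' hsum (fun d => (hrow d).summable)]
  exact tsum_congr fun d => ((hrow d).tsum_eq).symm

set_option maxHeartbeats 1000000 in
lemma group {ι : Type*} (w : ι → ℕ) (fib : ℕ → Finset ι)
    (hfib : ∀ N i, i ∈ fib N ↔ w i = N) (κ : ι → ℂ)
    (h : Summable (fun i => κ i * q ^ (w i))) :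
    HasSum (fun N => (∑ i ∈ fib N, κ i) * q ^ N) (∑' i, κ i * q ^ (w i)) := by
  classical
  have H := h.hasSum
  have H2 : HasSum (fun p : (Σ N : ℕ, {i // w i = N}) => κ p.2.1 * q ^ (w p.2.1))
      (∑' i, κ i * q ^ (w i)) :=
    (Equiv.hasSum_iff (Equiv.sigmaFiberEquiv w)).mpr H
  apply H2.sigma
  intro N
  have hfin : HasSum (fun c : {i // i ∈ fib N} => κ c.1 * q ^ (w c.1))
      (∑ c : {i // i ∈ fib N}, (κ c.1 * q ^ (w c.1))) := hasSum_fintype _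
  have hval : (∑ c : {i // i ∈ fib N}, (κ c.1 * q ^ (w c.1))) = (∑ i ∈ fib N, κ i) * q ^ N := by
    rw [Finset.sum_coe_sort (fib N) (fun i => κ i * q ^ (w i))]
    rw [Finset.sum_mul]
    apply Finset.sum_congr rfl
    intro i hi
    rw [(hfib N i).mp hi]
  rw [hval] at hfin
  exact (Equiv.hasSum_iff (Equiv.subtypeEquivRight (fun i => (hfib N i)))).mp hfin

/-- coefficient form of Phi -/
lemma hasSum_phi (ν : ℕ) (hq : ‖q‖ < 1) :
    HasSum (fun N => (∑ p ∈ T2 N, ((p.1:ℂ)+1)^ν) * q ^ N) (Phi ν q) := by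
  rw [phi_eq ν hq]
  exact group (fun p : ℕ × ℕ => (p.1+1)*(p.2+1)) T2 (fun N p => mem_T2)
    (fun p => ((p.1:ℂ)+1)^ν) (summable2 ν hq).of_norm

/-- coefficient form of a product of two Phis -/
lemma hasSum_phi_mul (ν μ : ℕ) (hq : ‖q‖ < 1) :
    HasSum (fun N => (∑ z ∈ T4 N, ((z.1.1:ℂ)+1)^ν * ((z.2.1:ℂ)+1)^μ) * q ^ N)
      (Phi ν q * Phi μ q) := by
  have h1 := summable2 ν hq
  have h2 := summable2 μ hq
  have hprod : Phi ν q * Phi μ q =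
      ∑' z : (ℕ × ℕ) × (ℕ × ℕ), (((z.1.1:ℂ)+1)^ν * ((z.2.1:ℂ)+1)^μ) *
        q ^ ((z.1.1+1)*(z.1.2+1) + (z.2.1+1)*(z.2.2+1)) := by
    rw [phi_eq ν hq, phi_eq μ hq, tsum_mul_tsum_of_summable_norm h1 h2]
    apply tsum_congr
    intro z
    rw [pow_add]
    ring
  rw [hprod]
  apply group (fun z : (ℕ × ℕ) × (ℕ × ℕ) => (z.1.1+1)*(z.1.2+1) + (z.2.1+1)*(z.2.2+1)) T4
    (fun N z => mem_T4) (fun z => ((z.1.1:ℂ)+1)^ν * ((z.2.1:ℂ)+1)^μ)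
  apply Summable.of_norm
  have h4 := (h1.mul_of_nonneg h2 (fun p => norm_nonneg _) (fun p => norm_nonneg _))
  apply h4.congr
  intro z
  rw [← norm_mul, pow_add]
  congr 1
  ring

end Analysis
end PhiAux

namespace PhiAux
open Finset

/-- cast of the weight-8 identity to ℂ coefficient form -/
lemma coeff8 (N : ℕ) :
    (120:ℂ) * ∑ z ∈ T4 N, ((z.1.1:ℂ)+1)^3 * ((z.2.1:ℂ)+1)^3 =
    (∑ p ∈ T2 N, ((p.1:ℂ)+1)^7) - (∑ p ∈ T2 N, ((p.1:ℂ)+1)^3) := by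
  have hZ := congrArg (fun z : ℤ => (z : ℂ)) (W8 N)
  push_cast at hZ
  have t4 : ∑ z ∈ T4 N, ((z.1.1:ℂ)+1)^3 * ((z.2.1:ℂ)+1)^3 =
      ∑ s ∈ S4 N, ((s.1.1:ℂ))^3 * ((s.2.1:ℂ))^3 := by
    rw [← sum_T4_S4 N (fun a b => (a:ℂ)^3 * (b:ℂ)^3)]
    apply Finset.sum_congr rfl
    intro z _
    push_cast
    ring
  have t7 : ∑ p ∈ T2 N, ((p.1:ℂ)+1)^7 = ∑ p ∈ S2 N, ((p.1:ℂ))^7 := by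
    rw [← sum_T2_S2 N (fun a b => (a:ℂ)^7)]
    apply Finset.sum_congr rfl
    intro p _
    push_cast
    ring
  have t3 : ∑ p ∈ T2 N, ((p.1:ℂ)+1)^3 = ∑ p ∈ S2 N, ((p.1:ℂ))^3 := by
    rw [← sum_T2_S2 N (fun a b => (a:ℂ)^3)]
    apply Finset.sum_congr rfl
    intro p _
    push_cast
    ring
  rw [t4, t7, t3]
  rw [Finset.mul_sum]
  calc ∑ s ∈ S4 N, (120:ℂ) * ((s.1.1:ℂ)^3 * (s.2.1:ℂ)^3)
      = ∑ s ∈ S4 N, ((120:ℂ) * (s.1.1:ℂ)^3 * (s.2.1:ℂ)^3) := by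
        apply Finset.sum_congr rfl; intro s _; ring
    _ = ∑ p ∈ S2 N, ((p.1:ℂ)^7 - (p.1:ℂ)^3) := hZ
    _ = (∑ p ∈ S2 N, ((p.1:ℂ))^7) - (∑ p ∈ S2 N, ((p.1:ℂ))^3) := Finset.sum_sub_distrib _ _

/-- cast of the weight-12 identity to ℂ coefficient form -/
lemma coeff12 (N : ℕ) :
    (5040:ℂ) * ∑ z ∈ T4 N, ((z.1.1:ℂ)+1)^3 * ((z.2.1:ℂ)+1)^7 +
    (5040:ℂ) * ∑ z ∈ T4 N, ((z.1.1:ℂ)+1)^7 * ((z.2.1:ℂ)+1)^3 +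
    (12600:ℂ) * ∑ z ∈ T4 N, ((z.1.1:ℂ)+1)^5 * ((z.2.1:ℂ)+1)^5 =
    13 * (∑ p ∈ T2 N, ((p.1:ℂ)+1)^11) - 21 * (∑ p ∈ T2 N, ((p.1:ℂ)+1)^3)
      + 50 * (∑ p ∈ T2 N, ((p.1:ℂ)+1)^5) - 42 * (∑ p ∈ T2 N, ((p.1:ℂ)+1)^7) := by
  have hZ := congrArg (fun z : ℤ => (z : ℂ)) (W12 N)
  push_cast at hZ
  have t37 : ∑ z ∈ T4 N, ((z.1.1:ℂ)+1)^3 * ((z.2.1:ℂ)+1)^7 =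
      ∑ s ∈ S4 N, ((s.1.1:ℂ))^3 * ((s.2.1:ℂ))^7 := by
    rw [← sum_T4_S4 N (fun a b => (a:ℂ)^3 * (b:ℂ)^7)]
    apply Finset.sum_congr rfl
    intro z _; push_cast; ring
  have t73 : ∑ z ∈ T4 N, ((z.1.1:ℂ)+1)^7 * ((z.2.1:ℂ)+1)^3 =
      ∑ s ∈ S4 N, ((s.1.1:ℂ))^7 * ((s.2.1:ℂ))^3 := by
    rw [← sum_T4_S4 N (fun a b => (a:ℂ)^7 * (b:ℂ)^3)]
    apply Finset.sum_congr rfl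
    intro z _; push_cast; ring
  have t55 : ∑ z ∈ T4 N, ((z.1.1:ℂ)+1)^5 * ((z.2.1:ℂ)+1)^5 =
      ∑ s ∈ S4 N, ((s.1.1:ℂ))^5 * ((s.2.1:ℂ))^5 := by
    rw [← sum_T4_S4 N (fun a b => (a:ℂ)^5 * (b:ℂ)^5)]
    apply Finset.sum_congr rfl
    intro z _; push_cast; ring
  have tP : ∀ k : ℕ, ∑ p ∈ T2 N, ((p.1:ℂ)+1)^k = ∑ p ∈ S2 N, ((p.1:ℂ))^k := by
    intro k
    rw [← sum_T2_S2 N (fun a b => (a:ℂ)^k)]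
    apply Finset.sum_congr rfl
    intro p _; push_cast; ring
  rw [t37, t73, t55, tP 11, tP 3, tP 5, tP 7]
  have expand : ∑ s ∈ S4 N, ((5040:ℂ) * (s.1.1:ℂ)^3 * (s.2.1:ℂ)^7 + 5040 * (s.1.1:ℂ)^7 * (s.2.1:ℂ)^3
      + 12600 * (s.1.1:ℂ)^5 * (s.2.1:ℂ)^5) =
      (5040:ℂ) * ∑ s ∈ S4 N, ((s.1.1:ℂ))^3 * ((s.2.1:ℂ))^7 +
      (5040:ℂ) * ∑ s ∈ S4 N, ((s.1.1:ℂ))^7 * ((s.2.1:ℂ))^3 +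
      (12600:ℂ) * ∑ s ∈ S4 N, ((s.1.1:ℂ))^5 * ((s.2.1:ℂ))^5 := by
    rw [Finset.mul_sum, Finset.mul_sum, Finset.mul_sum, ← Finset.sum_add_distrib,
      ← Finset.sum_add_distrib]
    apply Finset.sum_congr rfl
    intro s _; ring
  rw [← expand, hZ]
  rw [Finset.mul_sum, Finset.mul_sum, Finset.mul_sum, Finset.mul_sum, ← Finset.sum_sub_distrib,
    ← Finset.sum_add_distrib, ← Finset.sum_sub_distrib]
  apply Finset.sum_congr rfl
  intro p _; ring

section Ids

variable {q : ℂ}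

lemma idI (hq : ‖q‖ < 1) : (120:ℂ) * (Phi 3 q * Phi 3 q) = Phi 7 q - Phi 3 q := by
  have h1 := (hasSum_phi_mul 3 3 hq).mul_left 120
  have h2 := (hasSum_phi 7 hq).sub (hasSum_phi 3 hq)
  have he : (fun N => (120:ℂ) * ((∑ z ∈ T4 N, ((z.1.1:ℂ)+1)^3 * ((z.2.1:ℂ)+1)^3) * q ^ N)) =
      (fun N => (∑ p ∈ T2 N, ((p.1:ℂ)+1)^7) * q ^ N - (∑ p ∈ T2 N, ((p.1:ℂ)+1)^3) * q ^ N) :=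
    funext fun N => by linear_combination (q:ℂ)^N * coeff8 N
  rw [he] at h1
  exact h1.unique h2

lemma idII (hq : ‖q‖ < 1) :
    (5040:ℂ) * (Phi 3 q * Phi 7 q) + 5040 * (Phi 7 q * Phi 3 q) + 12600 * (Phi 5 q * Phi 5 q) =
    13 * Phi 11 q - 21 * Phi 3 q + 50 * Phi 5 q - 42 * Phi 7 q := by
  have h1 := (((hasSum_phi_mul 3 7 hq).mul_left 5040).add
    ((hasSum_phi_mul 7 3 hq).mul_left 5040)).add ((hasSum_phi_mul 5 5 hq).mul_left 12600)
  have h2 := ((((hasSum_phi 11 hq).mul_left 13).sub ((hasSum_phi 3 hq).mul_left 21)).add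
    ((hasSum_phi 5 hq).mul_left 50)).sub ((hasSum_phi 7 hq).mul_left 42)
  have he : (fun N => (5040:ℂ) * ((∑ z ∈ T4 N, ((z.1.1:ℂ)+1)^3 * ((z.2.1:ℂ)+1)^7) * q ^ N) +
        (5040:ℂ) * ((∑ z ∈ T4 N, ((z.1.1:ℂ)+1)^7 * ((z.2.1:ℂ)+1)^3) * q ^ N) +
        (12600:ℂ) * ((∑ z ∈ T4 N, ((z.1.1:ℂ)+1)^5 * ((z.2.1:ℂ)+1)^5) * q ^ N)) =
      (fun N => (13:ℂ) * ((∑ p ∈ T2 N, ((p.1:ℂ)+1)^11) * q ^ N) -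
        (21:ℂ) * ((∑ p ∈ T2 N, ((p.1:ℂ)+1)^3) * q ^ N) +
        (50:ℂ) * ((∑ p ∈ T2 N, ((p.1:ℂ)+1)^5) * q ^ N) -
        (42:ℂ) * ((∑ p ∈ T2 N, ((p.1:ℂ)+1)^7) * q ^ N)) :=
    funext fun N => by linear_combination (q:ℂ)^N * coeff12 N
  rw [he] at h1
  exact h1.unique h2

end Ids
end PhiAux

/-- With Q = 1 + 240Φ₃ and R = 1 − 504Φ₅,
Φ₁₁ = (−691 + 441Q³ + 250R²)/65520 for |q| < 1. -/
theorem Phi11_eval (q : ℂ) (hq : ‖q‖ < 1) :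
    Phi 11 q = (-691 + 441 * (1 + 240 * Phi 3 q) ^ 3 + 250 * (1 - 504 * Phi 5 q) ^ 2) / 65520 := by
  have hI := PhiAux.idI hq
  have hII := PhiAux.idII hq
  rw [eq_div_iff (by norm_num : (65520:ℂ) ≠ 0)]
  linear_combination (-211680 - 50803200 * Phi 3 q) * hI + (-5040) * hII
end
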